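/- If the semantic realizability checker is both over-approximate and consistent, and the worklist implements fair enumeration (every enqueued string is eventually dequeued), then constrained decoding is complete: if there exists a string ω ending in END with φ(parse(ω)), the algorithm eventually returns some string satisfying φ. -/

import Mathlib

/-- **Completeness of constrained decoding with an over-approximate and
consistent checker under fair enumeration.**

We model a (non-returning portion of a) run of the worklist algorithm by the
sequence `seq : ℕ → List Tok` of dequeued prefixes: the empty string is dequeued
first, every dequeued string other than the first is a realizable one-token
non-`END` extension of a previously dequeued string, and fairness says that every
realizable non-`END` one-token extension of a dequeued string (i.e. every
enqueued string) is eventually dequeued.  The algorithm returns at step `n`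
when `seq n ++ [END]` passes the realizability check.

If the checker is over-approximate and consistent, and some complete string
(ending in `END`) satisfies `φ`, then the run eventually reaches a return event,
and the returned string satisfies `φ`. -/
theorem completeness_of_fair_constrained_decoding
    {Tok AST : Type*} (END : Tok)
    (parse : List Tok → Option AST) (φ : AST → Prop)
    (realizable : List Tok → Prop)
    -- every string satisfying φ contains END exactly once, in the final position
    (hend : ∀ ω : List Tok, (∃ t, parse ω = some t ∧ φ t) →
      ω.getLast? = some END ∧ END ∉ ω.dropLast)
    -- over-approximate checker
    (hover : ∀ ω : List Tok,
      (∃ ω' : List Tok, ∃ t, parse (ω ++ ω') = some t ∧ φ t) → realizable ω)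
    -- consistent checker
    (hcons : ∀ ω : List Tok, ω.getLast? = some END →
      (realizable ω ↔ ∃ t, parse ω = some t ∧ φ t))
    -- the run of the algorithm
    (seq : ℕ → List Tok)
    (hstart : seq 0 = [])
    (hstep : ∀ n : ℕ, 0 < n → ∃ m < n, ∃ τ : Tok,
      τ ≠ END ∧ seq n = seq m ++ [τ] ∧ realizable (seq n))
    -- fair enumeration: every enqueued string is eventually dequeued
    (hfair : ∀ (n : ℕ) (τ : Tok), τ ≠ END → realizable (seq n ++ [τ]) →
      ∃ m : ℕ, seq m = seq n ++ [τ])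
    -- there exists a complete string satisfying φ
    (hex : ∃ ω : List Tok, ω.getLast? = some END ∧ ∃ t, parse ω = some t ∧ φ t) :
    ∃ n : ℕ, realizable (seq n ++ [END]) ∧
      ∃ t, parse (seq n ++ [END]) = some t ∧ φ t := by
  obtain ⟨ω, hlast, t, hparse, hφ⟩ := hex
  have hne : ω ≠ [] := by
    intro h; subst h; simp at hlast
  have hdecomp : ω.dropLast ++ [END] = ω := by
    have h := List.dropLast_append_getLast hne
    rw [List.getLast?_eq_getLast hne, Option.some_inj] at hlast
    rwa [hlast] at h
  have hnoend : END ∉ ω.dropLast := (hend ω ⟨t, hparse, hφ⟩).2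
  -- every prefix of ω.dropLast is eventually dequeued
  have key : ∀ p : List Tok, p <+: ω.dropLast → ∃ n, seq n = p := by
    intro p
    induction p using List.reverseRecOn with
    | nil => intro _; exact ⟨0, hstart⟩
    | append_singleton q τ ih =>
      intro hpre
      obtain ⟨n, hn⟩ := ih ((List.prefix_append q [τ]).trans hpre)
      have hτmem : τ ∈ ω.dropLast := hpre.subset (by simp)
      have hτ : τ ≠ END := by rintro rfl; exact hnoend hτmem
      obtain ⟨s, hs⟩ := hpre
      have hreal : realizable (q ++ [τ]) := by
        apply hover
        refine ⟨s ++ [END], t, ?_, hφ⟩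
        rw [← List.append_assoc, hs, hdecomp]; exact hparse
      obtain ⟨m, hm⟩ := hfair n τ hτ (by rw [hn]; exact hreal)
      exact ⟨m, by rw [hm, hn]⟩
  obtain ⟨n, hn⟩ := key ω.dropLast (List.prefix_refl _)
  refine ⟨n, ?_, ?_⟩
  · apply hover
    exact ⟨[], t, by rw [List.append_nil, hn, hdecomp]; exact hparse, hφ⟩
  · exact ⟨t, by rw [hn, hdecomp]; exact hparse, hφ⟩
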